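/- Let f : F → G be a homomorphism of formal group laws over a commutative ring R. If the linear coefficient of f is zero, then the formal derivative of f is the zero power series; equivalently, n·(coefficient of T^n in f) = 0 for all n ≥ 1. -/

import Mathlib

namespace FGL

variable {R : Type*} [CommRing R]

/-- `subst2 F a b` is the substitution `F(a,b)` of the power series `a`, `b`
(with zero constant term) into the two-variable power series `F`. -/
noncomputable def subst2 {σ : Type*} (F : MvPowerSeries (Fin 2) R)
    (a b : MvPowerSeries σ R) : MvPowerSeries σ R :=
  fun d =>
    ∑ ij ∈ Finset.range ((d.sum fun _ k => k) + 1) ×ˢ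
        Finset.range ((d.sum fun _ k => k) + 1),
      MvPowerSeries.coeff (Finsupp.single 0 ij.1 + Finsupp.single 1 ij.2) F *
        MvPowerSeries.coeff d (a ^ ij.1 * b ^ ij.2)

/-- `subst1 f G` is the substitution `f(G)` of the power series `G`
(with zero constant term) into the one-variable power series `f`. -/
noncomputable def subst1 {σ : Type*} (f : PowerSeries R) (G : MvPowerSeries σ R) :
    MvPowerSeries σ R :=
  fun d =>
    ∑ n ∈ Finset.range ((d.sum fun _ k => k) + 1),
      PowerSeries.coeff n f * MvPowerSeries.coeff d (G ^ n)

/-- Composition `f(g)` of one-variable power series (`g` with zero constant term). -/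
noncomputable def pcomp (f g : PowerSeries R) : PowerSeries R := subst1 f g

/-- A formal group law over `R`: a two-variable power series `F(X,Y)` with
`F(X,0) = X`, `F(0,Y) = Y`, `F(X,Y) = F(Y,X)` and `F(F(X,Y),Z) = F(X,F(Y,Z))`. -/
structure IsFGL (F : MvPowerSeries (Fin 2) R) : Prop where
  unit_left : subst2 F (MvPowerSeries.X 0) 0 = MvPowerSeries.X 0
  unit_right : subst2 F 0 (MvPowerSeries.X 1) = MvPowerSeries.X 1
  comm : subst2 F (MvPowerSeries.X 1) (MvPowerSeries.X 0) = F
  assoc : subst2 F (subst2 F (MvPowerSeries.X 0) (MvPowerSeries.X 1))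
        (MvPowerSeries.X 2 : MvPowerSeries (Fin 3) R)
      = subst2 F (MvPowerSeries.X 0) (subst2 F (MvPowerSeries.X 1) (MvPowerSeries.X 2))

/-- A homomorphism `f : F → G` of formal group laws: a one-variable power series with
zero constant term such that `f(F(X,Y)) = G(f(X), f(Y))`. -/
structure IsHom (F G : MvPowerSeries (Fin 2) R) (f : PowerSeries R) : Prop where
  const : PowerSeries.constantCoeff f = 0
  hom : subst1 f F =
    subst2 G (subst1 f (MvPowerSeries.X 0)) (subst1 f (MvPowerSeries.X 1))

/-- The coefficientwise Frobenius twist `F^{(p)}`. -/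
noncomputable def frob (p : ℕ) (F : MvPowerSeries (Fin 2) R) : MvPowerSeries (Fin 2) R :=
  fun d => (MvPowerSeries.coeff d F) ^ p

/-- The one-variable power series `F_Y(X,0)`, whose coefficient of `X^n` is the
coefficient of `X^n Y` in `F`. -/
noncomputable def FY0 (F : MvPowerSeries (Fin 2) R) : PowerSeries R :=
  PowerSeries.mk fun n =>
    MvPowerSeries.coeff (Finsupp.single 0 n + Finsupp.single 1 1) F

/-- The formal partial derivative `F_X(X,Y)` with respect to the first variable. -/
noncomputable def FX (F : MvPowerSeries (Fin 2) R) : MvPowerSeries (Fin 2) R :=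
  fun d => ((d 0 + 1 : ℕ) : R) * MvPowerSeries.coeff (d + Finsupp.single 0 1) F

/-- The `n`-series `[n]_F` of a formal group law, defined by `[0]_F = 0` and
`[n+1]_F(X) = F([n]_F(X), X)`. -/
noncomputable def nSeries (F : MvPowerSeries (Fin 2) R) : ℕ → PowerSeries R
  | 0 => 0
  | n + 1 => subst2 F (nSeries F n) PowerSeries.X

-- ===== auxiliary lemmas =====
open MvPowerSeries Finset

noncomputable def m2 (i j : ℕ) : Fin 2 →₀ ℕ := Finsupp.single 0 i + Finsupp.single 1 j

lemma m2_apply0 (i j : ℕ) : m2 i j 0 = i := by simp [m2, Finsupp.single_apply]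
lemma m2_apply1 (i j : ℕ) : m2 i j 1 = j := by simp [m2, Finsupp.single_apply]

lemma eq_m2 (d : Fin 2 →₀ ℕ) : d = m2 (d 0) (d 1) := by
  ext t; fin_cases t
  · simp [m2_apply0]
  · simp [m2_apply1]

lemma m2_zero_right (i : ℕ) : m2 i 0 = Finsupp.single 0 i := by simp [m2]
lemma m2_zero_left (j : ℕ) : m2 0 j = Finsupp.single 1 j := by simp [m2]

lemma sum2 (d : Fin 2 →₀ ℕ) : (d.sum fun _ k => k) = d 0 + d 1 := by
  rw [Finsupp.sum_fintype _ _ (fun _ => rfl), Fin.sum_univ_two]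

lemma m2_sum (i j : ℕ) : ((m2 i j).sum fun _ k => k) = i + j := by
  rw [sum2, m2_apply0, m2_apply1]

lemma coeff_subst1 {σ : Type*} (f : PowerSeries R) (G : MvPowerSeries σ R) (d : σ →₀ ℕ) :
    MvPowerSeries.coeff d (subst1 f G) =
      ∑ n ∈ Finset.range ((d.sum fun _ k => k) + 1),
        PowerSeries.coeff n f * MvPowerSeries.coeff d (G ^ n) := rfl

lemma coeff_subst2 {σ : Type*} (F : MvPowerSeries (Fin 2) R) (a b : MvPowerSeries σ R)
    (d : σ →₀ ℕ) :
    MvPowerSeries.coeff d (subst2 F a b) =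
      ∑ ij ∈ Finset.range ((d.sum fun _ k => k) + 1) ×ˢ
          Finset.range ((d.sum fun _ k => k) + 1),
        MvPowerSeries.coeff (Finsupp.single 0 ij.1 + Finsupp.single 1 ij.2) F *
          MvPowerSeries.coeff d (a ^ ij.1 * b ^ ij.2) := rfl

lemma coeff_mul2 (d : Fin 2 →₀ ℕ) (x y : MvPowerSeries (Fin 2) R) :
    MvPowerSeries.coeff d (x * y) =
      ∑ p ∈ (antidiagonal (d 0)) ×ˢ (antidiagonal (d 1)),
        MvPowerSeries.coeff (m2 p.1.1 p.2.1) x * MvPowerSeries.coeff (m2 p.1.2 p.2.2) y := by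
  rw [MvPowerSeries.coeff_mul]
  refine Finset.sum_nbij' (fun p => ((p.1 0, p.2 0), (p.1 1, p.2 1)))
    (fun q => (m2 q.1.1 q.2.1, m2 q.1.2 q.2.2)) ?_ ?_ ?_ ?_ ?_
  · rintro ⟨p1, p2⟩ hp
    rw [Finset.HasAntidiagonal.mem_antidiagonal] at hp
    simp only [Finset.mem_product, Finset.HasAntidiagonal.mem_antidiagonal]
    constructor
    · have := DFunLike.congr_fun hp 0; simpa using this
    · have := DFunLike.congr_fun hp 1; simpa using this
  · rintro ⟨⟨a, b⟩, ⟨c, e⟩⟩ hq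
    simp only [Finset.mem_product, Finset.HasAntidiagonal.mem_antidiagonal] at hq
    rw [Finset.HasAntidiagonal.mem_antidiagonal]
    conv_rhs => rw [eq_m2 d]
    rw [← hq.1, ← hq.2]
    ext t; fin_cases t <;> simp [m2_apply0, m2_apply1]
  · rintro ⟨p1, p2⟩ hp
    simp only [Prod.mk.injEq]
    exact ⟨(eq_m2 p1).symm, (eq_m2 p2).symm⟩
  · rintro ⟨⟨a, b⟩, ⟨c, e⟩⟩ hq
    simp [m2_apply0, m2_apply1]
  · rintro ⟨p1, p2⟩ hp
    rw [← eq_m2 p1, ← eq_m2 p2]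

/-- pure-X coefficients of a formal group law -/

lemma single_eq_single0 {σ : Type*} {s : σ} {m i : ℕ} (h : Finsupp.single s m = Finsupp.single s i) : m = i := by
  simpa using DFunLike.congr_fun h s

lemma sum_single (s : ℕ) (m : ℕ) : ((Finsupp.single s m).sum fun _ k => k) = m :=
  Finsupp.sum_single_index rfl

/-- pure-X coefficients of a formal group law -/
lemma cX {F : MvPowerSeries (Fin 2) R} (hF : IsFGL F) (m : ℕ) :
    MvPowerSeries.coeff (Finsupp.single 0 m) F = if m = 1 then 1 else 0 := by
  have h2 : MvPowerSeries.coeff (Finsupp.single (0:ℕ) m) (subst2 F (MvPowerSeries.X 0) 0)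
      = MvPowerSeries.coeff (Finsupp.single (0:ℕ) m) (MvPowerSeries.X 0) := by
    rw [hF.unit_left]
  rw [coeff_subst2, sum_single, Finset.sum_eq_single_of_mem (m, 0) (by simp)] at h2
  · rw [pow_zero, mul_one, MvPowerSeries.coeff_X_pow, if_pos rfl, mul_one, Finsupp.single_zero,
      add_zero, MvPowerSeries.coeff_X] at h2
    rw [h2]
    by_cases hm : m = 1
    · subst hm; simp
    · rw [if_neg (fun hc => hm (single_eq_single0 hc)), if_neg hm]
  · rintro ⟨i, j⟩ hmem hne
    rcases Nat.eq_zero_or_pos j with rfl | hj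
    · have hi : i ≠ m := fun hc => hne (by rw [hc])
      rw [pow_zero, mul_one, MvPowerSeries.coeff_X_pow,
        if_neg (fun hc => hi (single_eq_single0 hc).symm), mul_zero]
    · rw [zero_pow hj.ne', mul_zero, map_zero, mul_zero]

/-- the X^0 Y^1 coefficient of a formal group law is 1 -/
lemma cY1 {F : MvPowerSeries (Fin 2) R} (hF : IsFGL F) :
    MvPowerSeries.coeff (Finsupp.single 1 1) F = 1 := by
  have h2 : MvPowerSeries.coeff (Finsupp.single (1:ℕ) 1) (subst2 F 0 (MvPowerSeries.X 1))
      = MvPowerSeries.coeff (Finsupp.single (1:ℕ) 1) (MvPowerSeries.X 1) := by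
    rw [hF.unit_right]
  rw [coeff_subst2, sum_single, Finset.sum_eq_single_of_mem (0, 1) (by simp)] at h2
  · rw [pow_zero, one_mul, pow_one] at h2
    simpa using h2
  · rintro ⟨i, j⟩ hmem hne
    rcases Nat.eq_zero_or_pos i with rfl | hi
    · have hj : j ≠ 1 := fun hc => hne (by rw [hc])
      rw [pow_zero, one_mul, MvPowerSeries.coeff_X_pow,
        if_neg (fun hc => hj (single_eq_single0 hc).symm), mul_zero]
    · rw [zero_pow hi.ne', zero_mul, map_zero, mul_zero]

lemma powX {F : MvPowerSeries (Fin 2) R} (hF : IsFGL F) (k m : ℕ) :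
    MvPowerSeries.coeff (Finsupp.single 0 m) (F ^ k) = if m = k then 1 else 0 := by
  induction k generalizing m with
  | zero =>
    rw [pow_zero, MvPowerSeries.coeff_one]
    by_cases hm : m = 0
    · subst hm; simp
    · rw [if_neg (fun hc => hm (by simpa using DFunLike.congr_fun hc 0)), if_neg hm]
  | succ k ih =>
    rw [pow_succ]
    have h0 : (Finsupp.single (0 : Fin 2) m) 0 = m := Finsupp.single_eq_same
    have h1 : (Finsupp.single (0 : Fin 2) m) 1 = 0 := Finsupp.single_eq_of_ne (by decide)
    rw [coeff_mul2, h0, h1, Finset.Nat.antidiagonal_zero, Finset.sum_product, ]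
    simp only [Finset.sum_singleton]
    have hterm : ∀ p ∈ Finset.HasAntidiagonal.antidiagonal m,
        MvPowerSeries.coeff (m2 p.1 0) (F ^ k) * MvPowerSeries.coeff (m2 p.2 0) F
          = if p = (k, 1) then 1 else 0 := by
      rintro ⟨i, i'⟩ hp
      rw [m2_zero_right, m2_zero_right, ih, cX hF]
      by_cases hik : i = k
      · by_cases hi' : i' = 1
        · subst hik; subst hi'; simp
        · simp [hi', Prod.ext_iff]
      · simp [hik, Prod.ext_iff]
    rw [Finset.sum_congr rfl hterm, Finset.sum_ite_eq' (Finset.HasAntidiagonal.antidiagonal m) ((k, 1)) (fun _ => (1:R))]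
    by_cases h : m = k + 1
    · rw [if_pos (Finset.HasAntidiagonal.mem_antidiagonal.mpr (by omega)), if_pos h]
    · rw [if_neg (fun hc => h (by have := Finset.HasAntidiagonal.mem_antidiagonal.mp hc; omega)), if_neg h]

lemma antidiagonal_nat_one : Finset.HasAntidiagonal.antidiagonal (1 : ℕ) = {(0, 1), (1, 0)} := by decide

lemma powXY {F : MvPowerSeries (Fin 2) R} (hF : IsFGL F) (k m : ℕ) :
    MvPowerSeries.coeff (m2 m 1) (F ^ k) =
      if k ≤ m + 1 then (k : R) * MvPowerSeries.coeff (m2 (m + 1 - k) 1) F else 0 := by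
  induction k generalizing m with
  | zero =>
    rw [pow_zero, MvPowerSeries.coeff_one,
      if_neg (fun hc => by simpa [m2_apply1] using DFunLike.congr_fun hc 1),
      if_pos (Nat.zero_le _), Nat.cast_zero, zero_mul]
  | succ k ih =>
    rw [pow_succ, coeff_mul2, m2_apply0, m2_apply1, antidiagonal_nat_one, Finset.sum_product]
    have hne : ((0,1) : ℕ × ℕ) ≠ (1,0) := by decide
    simp only [Finset.sum_insert (by decide : ((0,1) : ℕ × ℕ) ∉ ({(1,0)} : Finset (ℕ × ℕ))),
      Finset.sum_singleton]
    rw [Finset.sum_add_distrib]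
    have hS1 : ∑ p ∈ Finset.HasAntidiagonal.antidiagonal m,
        MvPowerSeries.coeff (m2 p.1 0) (F ^ k) * MvPowerSeries.coeff (m2 p.2 1) F
        = if k ≤ m then MvPowerSeries.coeff (m2 (m - k) 1) F else 0 := by
      by_cases hkm : k ≤ m
      · rw [if_pos hkm,
          Finset.sum_eq_single_of_mem (k, m - k) (Finset.HasAntidiagonal.mem_antidiagonal.mpr (by omega))]
        · rw [m2_zero_right, powX hF, if_pos rfl, one_mul]
        · rintro ⟨i, i'⟩ hp hne'
          have hi : i ≠ k := fun hc => hne' (by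
            have := Finset.HasAntidiagonal.mem_antidiagonal.mp hp; simp at this ⊢; omega)
          rw [m2_zero_right, powX hF, if_neg hi, zero_mul]
      · rw [if_neg hkm]
        refine Finset.sum_eq_zero ?_
        rintro ⟨i, i'⟩ hp
        have := Finset.HasAntidiagonal.mem_antidiagonal.mp hp
        have hi : i ≠ k := by simp at this; omega
        rw [m2_zero_right, powX hF, if_neg hi, zero_mul]
    have hS2 : ∑ p ∈ Finset.HasAntidiagonal.antidiagonal m,
        MvPowerSeries.coeff (m2 p.1 1) (F ^ k) * MvPowerSeries.coeff (m2 p.2 0) F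
        = if 1 ≤ m ∧ k ≤ m then (k : R) * MvPowerSeries.coeff (m2 (m - k) 1) F else 0 := by
      by_cases hm : 1 ≤ m ∧ k ≤ m
      · rw [if_pos hm,
          Finset.sum_eq_single_of_mem (m - 1, 1) (Finset.HasAntidiagonal.mem_antidiagonal.mpr (by omega))]
        · rw [m2_zero_right, cX hF, if_pos rfl, mul_one, ih, if_pos (by omega),
            show m - 1 + 1 - k = m - k by omega]
        · rintro ⟨i, i'⟩ hp hne'
          have hi : i' ≠ 1 := fun hc => hne' (by
            have := Finset.HasAntidiagonal.mem_antidiagonal.mp hp; simp at this ⊢; omega)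
          rw [m2_zero_right, cX hF, if_neg hi, mul_zero]
      · rw [if_neg hm]
        refine Finset.sum_eq_zero ?_
        rintro ⟨i, i'⟩ hp
        have hmem := Finset.HasAntidiagonal.mem_antidiagonal.mp hp
        simp only at hmem
        by_cases hi : i' = 1
        · -- then m ≥ 1, so k > m, and i = m - 1, so the F^k factor vanishes
          have h1m : 1 ≤ m := by omega
          have hk : ¬ k ≤ m := fun h => hm ⟨h1m, h⟩
          rw [ih, if_neg (by omega), zero_mul]
        · rw [m2_zero_right, cX hF, if_neg hi, mul_zero]
    rw [hS1, hS2, show m + 1 - (k + 1) = m - k by omega]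
    by_cases hkm : k ≤ m
    · rw [if_pos hkm, if_pos (show k + 1 ≤ m + 1 by omega)]
      by_cases hm1 : 1 ≤ m
      · rw [if_pos ⟨hm1, hkm⟩]
        push_cast
        ring
      · have hm0 : m = 0 := by omega
        have hk0 : k = 0 := by omega
        subst hm0; subst hk0
        norm_num
    · rw [if_neg hkm, if_neg (fun hc => hkm hc.2), add_zero, if_neg (by omega)]

lemma sum_single' {σ : Type*} (s : σ) (m : ℕ) :
    ((Finsupp.single s m).sum fun _ k => k) = m := Finsupp.sum_single_index rfl

lemma supp_mul (t : Fin 2) (x y : MvPowerSeries (Fin 2) R)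
    (hx : ∀ e, e t ≠ 0 → MvPowerSeries.coeff e x = 0)
    (hy : ∀ e, e t ≠ 0 → MvPowerSeries.coeff e y = 0) :
    ∀ e, e t ≠ 0 → MvPowerSeries.coeff e (x * y) = 0 := by
  intro e he
  rw [MvPowerSeries.coeff_mul]
  refine Finset.sum_eq_zero ?_
  rintro ⟨p1, p2⟩ hp
  have hmem := Finset.HasAntidiagonal.mem_antidiagonal.mp hp
  have : p1 t + p2 t = e t := by rw [← hmem]; rfl
  rcases Nat.eq_zero_or_pos (p1 t) with h1 | h1
  · rw [hy p2 (by omega), mul_zero]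
  · rw [hx p1 (by omega), zero_mul]

lemma supp_pow (t : Fin 2) (x : MvPowerSeries (Fin 2) R)
    (hx : ∀ e, e t ≠ 0 → MvPowerSeries.coeff e x = 0) (i : ℕ) :
    ∀ e, e t ≠ 0 → MvPowerSeries.coeff e (x ^ i) = 0 := by
  induction i with
  | zero =>
    intro e he
    rw [pow_zero, MvPowerSeries.coeff_one, if_neg (fun hc => he (by rw [hc]; rfl))]
  | succ i ih =>
    rw [pow_succ]
    exact supp_mul t _ _ ih hx

lemma supp_subst1X (f : PowerSeries R) (s t : Fin 2) (hst : t ≠ s) :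
    ∀ e : Fin 2 →₀ ℕ, e t ≠ 0 →
      MvPowerSeries.coeff e (subst1 f (MvPowerSeries.X s)) = 0 := by
  intro e he
  rw [coeff_subst1]
  refine Finset.sum_eq_zero fun n _ => ?_
  rw [MvPowerSeries.coeff_X_pow]
  by_cases hc : e = Finsupp.single s n
  · exact absurd (by rw [hc, Finsupp.single_eq_of_ne hst]) he
  · rw [if_neg hc, mul_zero]

lemma const_subst1X (f : PowerSeries R) (hf0 : PowerSeries.constantCoeff f = 0) (s : Fin 2) :
    MvPowerSeries.coeff 0 (subst1 f (MvPowerSeries.X s)) = 0 := by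
  rw [coeff_subst1, Finsupp.sum_zero_index, Finset.sum_range_one, pow_zero,
    MvPowerSeries.coeff_one, if_pos rfl, mul_one, PowerSeries.coeff_zero_eq_constantCoeff, hf0]

lemma mul_single_one (t : Fin 2) (x y : MvPowerSeries (Fin 2) R)
    (hx : MvPowerSeries.coeff 0 x = 0) (hy : MvPowerSeries.coeff 0 y = 0) :
    MvPowerSeries.coeff (Finsupp.single t 1) (x * y) = 0 := by
  rw [MvPowerSeries.coeff_mul]
  refine Finset.sum_eq_zero ?_
  rintro ⟨p1, p2⟩ hp
  have hmem := Finset.HasAntidiagonal.mem_antidiagonal.mp hp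
  have happ : ∀ u, p1 u + p2 u = (Finsupp.single t 1) u := fun u => by rw [← hmem]; rfl
  rcases Nat.eq_zero_or_pos (p1 t) with h1 | h1
  · have hp1 : p1 = 0 := by
      ext u
      simp only [Finsupp.coe_zero, Pi.zero_apply]
      rcases eq_or_ne u t with rfl | hu
      · exact h1
      · have h := happ u
        rw [Finsupp.single_eq_of_ne hu] at h
        omega
    rw [hp1, hx, zero_mul]
  · have hp2 : p2 = 0 := by
      ext u
      simp only [Finsupp.coe_zero, Pi.zero_apply]
      rcases eq_or_ne u t with rfl | hu
      · have h := happ u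
        rw [Finsupp.single_eq_same] at h
        omega
      · have h := happ u
        rw [Finsupp.single_eq_of_ne hu] at h
        omega
    rw [hp2, hy, mul_zero]

lemma v_single_one (f : PowerSeries R) (hf0 : PowerSeries.constantCoeff f = 0)
    (hf1 : PowerSeries.coeff 1 f = 0) (s : Fin 2) (j : ℕ) :
    MvPowerSeries.coeff (Finsupp.single s 1) ((subst1 f (MvPowerSeries.X s)) ^ j) = 0 := by
  set v := subst1 f (MvPowerSeries.X s) with hv
  match j with
  | 0 =>
    rw [pow_zero, MvPowerSeries.coeff_one,
      if_neg (fun hc => by simpa using DFunLike.congr_fun hc s)]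
  | 1 =>
    rw [pow_one, hv, coeff_subst1, sum_single', Finset.sum_range_succ, Finset.sum_range_one,
      pow_zero, MvPowerSeries.coeff_one,
      if_neg (fun hc => by simpa using DFunLike.congr_fun hc s), mul_zero, zero_add,
      pow_one, hf1, zero_mul]
  | (j + 2) =>
    rw [pow_succ, mul_comm]
    refine mul_single_one s _ _ (const_subst1X f hf0 s) ?_
    rw [MvPowerSeries.coeff_zero_eq_constantCoeff, map_pow, ← MvPowerSeries.coeff_zero_eq_constantCoeff,
      const_subst1X f hf0 s, zero_pow (Nat.succ_ne_zero _)]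

lemma rhs_zero (G : MvPowerSeries (Fin 2) R) (f : PowerSeries R)
    (hf0 : PowerSeries.constantCoeff f = 0) (hf1 : PowerSeries.coeff 1 f = 0) (n : ℕ) :
    MvPowerSeries.coeff (m2 n 1)
      (subst2 G (subst1 f (MvPowerSeries.X 0)) (subst1 f (MvPowerSeries.X 1))) = 0 := by
  rw [coeff_subst2]
  refine Finset.sum_eq_zero ?_
  rintro ⟨i, j⟩ _
  rw [coeff_mul2, m2_apply0, m2_apply1, antidiagonal_nat_one, Finset.sum_product]
  simp only [Finset.sum_insert (by decide : ((0,1) : ℕ × ℕ) ∉ ({(1,0)} : Finset (ℕ × ℕ))),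
    Finset.sum_singleton]
  have hz : ∀ p ∈ Finset.HasAntidiagonal.antidiagonal n,
      (MvPowerSeries.coeff (m2 p.1 0) ((subst1 f (MvPowerSeries.X 0)) ^ i) *
        MvPowerSeries.coeff (m2 p.2 1) ((subst1 f (MvPowerSeries.X 1)) ^ j)) +
      (MvPowerSeries.coeff (m2 p.1 1) ((subst1 f (MvPowerSeries.X 0)) ^ i) *
        MvPowerSeries.coeff (m2 p.2 0) ((subst1 f (MvPowerSeries.X 1)) ^ j)) = 0 := by
    rintro ⟨a, b⟩ _
    have h2 : MvPowerSeries.coeff (m2 a 1) ((subst1 f (MvPowerSeries.X 0)) ^ i) = 0 :=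
      supp_pow 1 _ (supp_subst1X f 0 1 (by decide)) i _ (by rw [m2_apply1]; exact one_ne_zero)
    have h1 : MvPowerSeries.coeff (m2 b 1) ((subst1 f (MvPowerSeries.X 1)) ^ j) = 0 := by
      rcases Nat.eq_zero_or_pos b with rfl | hb
      · rw [m2_zero_left]
        exact v_single_one f hf0 hf1 1 j
      · exact supp_pow 0 _ (supp_subst1X f 1 0 (by decide)) j _ (by rw [m2_apply0]; omega)
    rw [h1, h2, mul_zero, zero_mul, add_zero]
  rw [Finset.sum_eq_zero hz, mul_zero]

lemma key_identity {F G : MvPowerSeries (Fin 2) R} (hF : IsFGL F)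
    {f : PowerSeries R} (hf : IsHom F G f) (hf1 : PowerSeries.coeff 1 f = 0) (n : ℕ) :
    ∑ k ∈ Finset.range (n + 2), PowerSeries.coeff k f *
      ((k : R) * MvPowerSeries.coeff (m2 (n + 1 - k) 1) F) = 0 := by
  have h := congrArg (fun x : MvPowerSeries (Fin 2) R => MvPowerSeries.coeff (m2 n 1) x) hf.hom
  rw [rhs_zero G f hf.const hf1 n, coeff_subst1, m2_sum] at h
  rw [← h]
  refine Finset.sum_congr rfl fun k hk => ?_
  rw [powXY hF, if_pos (by have := Finset.mem_range.mp hk; omega)]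

lemma main_lemma {F G : MvPowerSeries (Fin 2) R} (hF : IsFGL F)
    {f : PowerSeries R} (hf : IsHom F G f) (hf1 : PowerSeries.coeff 1 f = 0) :
    ∀ n : ℕ, 1 ≤ n → (n : R) * PowerSeries.coeff n f = 0 := by
  intro n
  induction n using Nat.strong_induction_on with
  | _ n ih =>
    intro hn
    obtain ⟨m, rfl⟩ : ∃ m, n = m + 1 := ⟨n - 1, by omega⟩
    have hkey := key_identity hF hf hf1 m
    rw [Finset.sum_range_succ] at hkey
    have hc0 : MvPowerSeries.coeff (m2 (m + 1 - (m + 1)) 1) F = 1 := by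
      rw [Nat.sub_self, m2_zero_left, cY1 hF]
    rw [hc0, mul_one] at hkey
    have hrest : ∑ k ∈ Finset.range (m + 1), PowerSeries.coeff k f *
        ((k : R) * MvPowerSeries.coeff (m2 (m + 1 - k) 1) F) = 0 := by
      refine Finset.sum_eq_zero fun k hk => ?_
      rcases Nat.eq_zero_or_pos k with rfl | hk1
      · simp
      · have hik := ih k (Finset.mem_range.mp hk) hk1
        calc PowerSeries.coeff k f * ((k : R) * MvPowerSeries.coeff (m2 (m + 1 - k) 1) F)
            = ((k : R) * PowerSeries.coeff k f) * MvPowerSeries.coeff (m2 (m + 1 - k) 1) F := by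
              ring
          _ = 0 := by rw [hik, zero_mul]
    rw [hrest, zero_add] at hkey
    calc ((m + 1 : ℕ) : R) * PowerSeries.coeff (m + 1) f
        = PowerSeries.coeff (m + 1) f * ((m + 1 : ℕ) : R) := by ring
      _ = 0 := hkey


/-- If `f : F → G` is a homomorphism of formal group laws whose linear coefficient is `0`,
then the formal derivative of `f` is the zero power series; equivalently
`n · (coefficient of T^n in f) = 0` for all `n ≥ 1`. -/
theorem statement2 (R : Type*) [CommRing R]
    (F G : MvPowerSeries (Fin 2) R) (hF : IsFGL F) (hG : IsFGL G)
    (f : PowerSeries R) (hf : IsHom F G f) (hf1 : PowerSeries.coeff 1 f = 0) :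
    PowerSeries.derivativeFun f = 0 ∧
      ∀ n : ℕ, 1 ≤ n → (n : R) * PowerSeries.coeff n f = 0 := by
  have hmain := main_lemma hF hf hf1
  refine ⟨?_, hmain⟩
  ext n
  rw [show PowerSeries.derivativeFun f = PowerSeries.derivative R f from rfl,
    PowerSeries.coeff_derivative, map_zero]
  have h := hmain (n + 1) (by omega)
  push_cast at h ⊢
  linear_combination h


end FGL
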